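/- Let G be an (n, d, λ)-graph. Then the independence number of G satisfies α(G) ≤ λn/(d+λ) ≤ λn/d. -/

import Mathlib

open Matrix Finset

/-- Hoffman bound: in an `(n,d,λ)`-graph, every independent set has size at
most `λn/(d+λ) ≤ λn/d`. -/
theorem stmt_13 {V : Type*} [Fintype V] [DecidableEq V]
    (G : SimpleGraph V) [DecidableRel G.Adj] (d : ℕ) (lam : ℝ)
    (hd : 0 < d) (hlam : 0 < lam)
    (hreg : G.IsRegularOfDegree d)
    (hA : (G.adjMatrix ℝ).IsHermitian)
    (heig : ∃ i₀ : V, hA.eigenvalues i₀ = (d : ℝ) ∧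
      ∀ i : V, i ≠ i₀ → |hA.eigenvalues i| < lam)
    (I : Finset V) (hI : ∀ u ∈ I, ∀ v ∈ I, ¬ G.Adj u v) :
    (I.card : ℝ) ≤ lam * (Fintype.card V : ℝ) / ((d : ℝ) + lam) ∧
    lam * (Fintype.card V : ℝ) / ((d : ℝ) + lam) ≤ lam * (Fintype.card V : ℝ) / d := by
  obtain ⟨i₀, hi₀, hoth⟩ := heig
  set A := G.adjMatrix ℝ with hAdef
  -- eigenvalue lower bound
  have hpos : ∀ i, 0 ≤ hA.eigenvalues i + lam := by
    intro i
    by_cases h : i = i₀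
    · subst h; rw [hi₀]; positivity
    · have := abs_lt.mp (hoth i h); linarith [this.1]
  -- PSD of A + lam•1
  have hU : (hA.eigenvectorUnitary : Matrix V V ℝ) * star (hA.eigenvectorUnitary : Matrix V V ℝ) = 1 :=
    Matrix.mem_unitaryGroup_iff.mp hA.eigenvectorUnitary.2
  have hdiag : diagonal (fun i => hA.eigenvalues i + lam) =
      diagonal (RCLike.ofReal ∘ hA.eigenvalues) + lam • (1 : Matrix V V ℝ) := by
    ext i j
    by_cases hij : i = j <;> simp [diagonal, hij, Matrix.one_apply, Function.comp]
  have hB : A + lam • (1 : Matrix V V ℝ) =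
      (hA.eigenvectorUnitary : Matrix V V ℝ) * diagonal (fun i => hA.eigenvalues i + lam) *
        star (hA.eigenvectorUnitary : Matrix V V ℝ) := by
    rw [hdiag, Matrix.mul_add, Matrix.add_mul]
    conv_lhs => rw [hA.spectral_theorem, Unitary.conjStarAlgAut_apply]
    congr 1
    rw [Matrix.mul_smul, Matrix.smul_mul, mul_one, hU]
  have hPSD : (A + lam • (1 : Matrix V V ℝ)).PosSemidef := by
    rw [hB]
    exact (Matrix.posSemidef_diagonal_iff.mpr hpos).mul_mul_conjTranspose_same _
  -- notation
  set n : ℝ := (Fintype.card V : ℝ) with hn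
  set m : ℝ := (I.card : ℝ) with hm
  have hn1 : (1 : ℝ) ≤ n := by
    have h1 : 1 ≤ Fintype.card V := Fintype.card_pos_iff.mpr ⟨i₀⟩
    rw [hn]
    exact_mod_cast h1
  have hm0 : 0 ≤ m := by positivity
  set χ : V → ℝ := fun v => if v ∈ I then 1 else 0 with hχ
  set o : V → ℝ := fun _ => 1 with ho
  -- row and column sums
  have hrow : ∀ u, ∑ v, A u v = (d : ℝ) := by
    intro u
    simp only [hAdef, SimpleGraph.adjMatrix_apply]
    rw [Finset.sum_boole]
    rw [← SimpleGraph.neighborFinset_eq_filter]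
    rw [← SimpleGraph.degree, hreg u]
  have hcol : ∀ v, ∑ u, A u v = (d : ℝ) := by
    intro v
    have : ∀ u, A u v = A v u := by
      intro u; simp [hAdef, SimpleGraph.adjMatrix_apply, G.adj_comm]
    simp_rw [this]; exact hrow v
  -- basic dot products
  have hχs : ∑ v, χ v = m := by
    simp [hχ, Finset.sum_boole, hm, Finset.filter_mem_eq_inter]
  have hχχd : χ ⬝ᵥ χ = m := by
    simp only [dotProduct]
    rw [← hχs]
    apply Finset.sum_congr rfl
    intro v _; by_cases h : v ∈ I <;> simp [hχ, h]
  have hχod : χ ⬝ᵥ o = m := by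
    simp only [dotProduct, ho, mul_one]; exact hχs
  have hoχd : o ⬝ᵥ χ = m := by
    simp only [dotProduct, ho, one_mul]; exact hχs
  have hood : o ⬝ᵥ o = n := by
    simp [dotProduct, ho, hn]
  -- dot products with A
  have hAχχ : χ ⬝ᵥ (A *ᵥ χ) = 0 := by
    simp only [dotProduct, Matrix.mulVec, dotProduct]
    apply Finset.sum_eq_zero
    intro u _
    by_cases hu : u ∈ I
    · have : ∑ v, A u v * χ v = 0 := by
        apply Finset.sum_eq_zero
        intro v _
        by_cases hv : v ∈ I
        · have : A u v = 0 := by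
            simp [hAdef, SimpleGraph.adjMatrix_apply, hI u hu v hv]
          simp [this]
        · simp [hχ, hv]
      rw [this, mul_zero]
    · simp [hχ, hu]
  have hAoχ : o ⬝ᵥ (A *ᵥ χ) = (d : ℝ) * m := by
    simp only [dotProduct, Matrix.mulVec, dotProduct, ho, one_mul]
    rw [Finset.sum_comm]
    have : ∀ v, ∑ u, A u v * χ v = (d : ℝ) * χ v := by
      intro v; rw [← Finset.sum_mul, hcol]
    simp_rw [this]
    rw [← Finset.mul_sum, hχs]
  have hAχo : χ ⬝ᵥ (A *ᵥ o) = (d : ℝ) * m := by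
    simp only [dotProduct, Matrix.mulVec, dotProduct, ho, mul_one]
    have : ∀ u, χ u * ∑ v, A u v = χ u * (d : ℝ) := by
      intro u; rw [hrow]
    simp_rw [this]
    rw [← Finset.sum_mul, hχs, mul_comm]
  have hAoo : o ⬝ᵥ (A *ᵥ o) = (d : ℝ) * n := by
    simp only [dotProduct, Matrix.mulVec, dotProduct, ho, mul_one, one_mul]
    simp_rw [hrow]
    simp [hn, mul_comm]
  -- the test vector
  set x : V → ℝ := n • χ - m • o with hx
  have hAx : x ⬝ᵥ (A *ᵥ x) = -(d : ℝ) * n * m ^ 2 := by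
    rw [hx, Matrix.mulVec_sub, Matrix.mulVec_smul, Matrix.mulVec_smul]
    simp only [sub_dotProduct, dotProduct_sub, smul_dotProduct,
      dotProduct_smul, smul_eq_mul]
    rw [hAχχ, hAoχ, hAχo, hAoo]
    ring
  have hxx : x ⬝ᵥ x = n ^ 2 * m - n * m ^ 2 := by
    rw [hx]
    simp only [sub_dotProduct, dotProduct_sub, smul_dotProduct,
      dotProduct_smul, smul_eq_mul]
    rw [hχχd, hχod, hoχd, hood]
    ring
  -- apply PSD
  have hkey : 0 ≤ -(d : ℝ) * n * m ^ 2 + lam * (n ^ 2 * m - n * m ^ 2) := by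
    have h0 := hPSD.re_dotProduct_nonneg x
    simp only [RCLike.re_to_real, star_trivial] at h0
    rw [Matrix.add_mulVec, Matrix.smul_mulVec, Matrix.one_mulVec,
      dotProduct_add, dotProduct_smul, smul_eq_mul, hAx, hxx] at h0
    linarith
  constructor
  · rw [le_div_iff₀ (by positivity)]
    rcases eq_or_lt_of_le hm0 with h | h
    · rw [← h, zero_mul]; positivity
    · have hn0 : 0 < n := by linarith
      nlinarith [mul_pos hn0 h]
  · apply div_le_div_of_nonneg_left (by positivity) (by positivity) (by linarith)
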